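/- Let A be an associative unital K-algebra over a field K of characteristic zero, containing elements η_1, η_2, … that pairwise anticommute (η_i η_j = −η_j η_i, η_i² = 0). Then for every integer N, ∑_{i + j + l = N} (i + j − 2 − l) · i · η_i η_j η_l = 0, where the sum is over ordered triples of positive integers (i, j, l) with i + j + l = N. -/

import Mathlib

section Aux

variable {K : Type*} [Field K] [CharZero K] {A : Type*} [Ring A] [Algebra K A]

private lemma eq_zero_of_eq_neg_self (K : Type*) [Field K] [CharZero K] {A : Type*}
    [Ring A] [Algebra K A] (x : A) (h : x = -x) : x = 0 := by
  have h2 : (2 : K) • x = 0 := by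
    rw [two_smul]
    rw [eq_neg_iff_add_eq_zero] at h
    exact h
  have h3 : ((2 : K)⁻¹ * 2) • x = 0 := by rw [mul_smul, h2, smul_zero]
  rwa [inv_mul_cancel₀ (two_ne_zero), one_smul] at h3

variable (η : ℕ → A) (hanti : ∀ i j, η i * η j = -(η j * η i))

private lemma swap23 (hanti : ∀ i j, η i * η j = -(η j * η i)) (i j l : ℕ) :
    η i * η j * η l = -(η i * η l * η j) := by
  rw [mul_assoc, hanti j l, mul_neg, mul_assoc]

private lemma swap12 (hanti : ∀ i j, η i * η j = -(η j * η i)) (i j l : ℕ) :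
    η i * η j * η l = -(η j * η i * η l) := by
  rw [hanti i j, neg_mul]

private lemma swap13 (hanti : ∀ i j, η i * η j = -(η j * η i)) (i j l : ℕ) :
    η i * η j * η l = -(η l * η j * η i) := by
  calc η i * η j * η l = -(η i * η l * η j) := swap23 η hanti i j l
    _ = -(-(η l * η i * η j)) := by rw [swap12 η hanti i l j]
    _ = η l * η i * η j := neg_neg _
    _ = -(η l * η j * η i) := swap23 η hanti l i j

/-- Sum with coefficient symmetric under `j ↔ l` vanishes. -/
private lemma lemA (hanti : ∀ i j, η i * η j = -(η j * η i)) (N : ℕ) (c : ℕ → ℕ → ℕ → K)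
    (hc : ∀ i j l, c i l j = c i j l) :
    ∑ i ∈ Finset.Ico 1 N, ∑ j ∈ Finset.Ico 1 (N - i),
      (c i j (N - i - j)) • (η i * η j * η (N - i - j)) = 0 := by
  apply Finset.sum_eq_zero
  intro i hi
  rw [Finset.mem_Ico] at hi
  set T := ∑ j ∈ Finset.Ico 1 (N - i),
      (c i j (N - i - j)) • (η i * η j * η (N - i - j)) with hT
  apply eq_zero_of_eq_neg_self K
  calc T = ∑ j ∈ Finset.Ico 1 (N - i),
      -((c i j (N - i - j)) • (η i * η j * η (N - i - j))) := by
        rw [hT]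
        refine Finset.sum_nbij' (fun j => N - i - j) (fun j => N - i - j) ?_ ?_ ?_ ?_ ?_
        · intro a ha; simp only [Finset.mem_Ico] at ha ⊢; omega
        · intro a ha; simp only [Finset.mem_Ico] at ha ⊢; omega
        · intro a ha; simp only [Finset.mem_Ico] at ha
          show N - i - (N - i - a) = a; omega
        · intro a ha; simp only [Finset.mem_Ico] at ha
          show N - i - (N - i - a) = a; omega
        · intro a ha
          simp only [Finset.mem_Ico] at ha
          show _ = -(c i (N - i - a) (N - i - (N - i - a)) •
            (η i * η (N - i - a) * η (N - i - (N - i - a))))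
          have h1 : N - i - (N - i - a) = a := by omega
          rw [h1, hc i a (N - i - a), swap23 η hanti i (N - i - a) a, smul_neg, neg_neg]
    _ = -T := by rw [hT, Finset.sum_neg_distrib]

/-- Sum with coefficient symmetric under `i ↔ l` vanishes. -/
private lemma lemB (hanti : ∀ i j, η i * η j = -(η j * η i)) (N : ℕ) (c : ℕ → ℕ → ℕ → K)
    (hc : ∀ i j l, c l j i = c i j l) :
    ∑ i ∈ Finset.Ico 1 N, ∑ j ∈ Finset.Ico 1 (N - i),
      (c i j (N - i - j)) • (η i * η j * η (N - i - j)) = 0 := by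
  set T := ∑ i ∈ Finset.Ico 1 N, ∑ j ∈ Finset.Ico 1 (N - i),
      (c i j (N - i - j)) • (η i * η j * η (N - i - j)) with hT
  apply eq_zero_of_eq_neg_self K
  have e1 : T = ∑ p ∈ (Finset.Ico 1 N).sigma (fun i => Finset.Ico 1 (N - i)),
      (c p.1 p.2 (N - p.1 - p.2)) • (η p.1 * η p.2 * η (N - p.1 - p.2)) := by
    rw [hT]
    exact Finset.sum_sigma' (Finset.Ico 1 N) (fun i => Finset.Ico 1 (N - i))
      (fun i j => (c i j (N - i - j)) • (η i * η j * η (N - i - j)))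
  have e2 : ∑ p ∈ (Finset.Ico 1 N).sigma (fun i => Finset.Ico 1 (N - i)),
      (c p.1 p.2 (N - p.1 - p.2)) • (η p.1 * η p.2 * η (N - p.1 - p.2))
      = ∑ p ∈ (Finset.Ico 1 N).sigma (fun i => Finset.Ico 1 (N - i)),
      -((c p.1 p.2 (N - p.1 - p.2)) • (η p.1 * η p.2 * η (N - p.1 - p.2))) := by
    refine Finset.sum_nbij' (fun p => ⟨N - p.1 - p.2, p.2⟩) (fun p => ⟨N - p.1 - p.2, p.2⟩)
      ?_ ?_ ?_ ?_ ?_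
    · rintro ⟨a, b⟩ ha
      simp only [Finset.mem_sigma, Finset.mem_Ico] at ha ⊢
      omega
    · rintro ⟨a, b⟩ ha
      simp only [Finset.mem_sigma, Finset.mem_Ico] at ha ⊢
      omega
    · rintro ⟨a, b⟩ ha
      simp only [Finset.mem_sigma, Finset.mem_Ico] at ha
      show (⟨N - (N - a - b) - b, b⟩ : Σ _ : ℕ, ℕ) = ⟨a, b⟩
      have : N - (N - a - b) - b = a := by omega
      rw [this]
    · rintro ⟨a, b⟩ ha
      simp only [Finset.mem_sigma, Finset.mem_Ico] at ha
      show (⟨N - (N - a - b) - b, b⟩ : Σ _ : ℕ, ℕ) = ⟨a, b⟩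
      have : N - (N - a - b) - b = a := by omega
      rw [this]
    · rintro ⟨a, b⟩ ha
      simp only [Finset.mem_sigma, Finset.mem_Ico] at ha
      show _ = -((c (N - a - b) b (N - (N - a - b) - b)) •
        (η (N - a - b) * η b * η (N - (N - a - b) - b)))
      have h1 : N - (N - a - b) - b = a := by omega
      rw [h1, hc a b (N - a - b), swap13 η hanti a b (N - a - b), smul_neg]
  calc T = ∑ p ∈ (Finset.Ico 1 N).sigma (fun i => Finset.Ico 1 (N - i)),
        -((c p.1 p.2 (N - p.1 - p.2)) • (η p.1 * η p.2 * η (N - p.1 - p.2))) := e1.trans e2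
    _ = -∑ p ∈ (Finset.Ico 1 N).sigma (fun i => Finset.Ico 1 (N - i)),
        (c p.1 p.2 (N - p.1 - p.2)) • (η p.1 * η p.2 * η (N - p.1 - p.2)) :=
      Finset.sum_neg_distrib _
    _ = -T := by rw [← e1]


end Aux

/-- For pairwise anticommuting `η_i` in a `K`-algebra, `K` of characteristic zero,
`∑_{i+j+l=N} (i+j-2-l)·i·η_i η_j η_l = 0`, the sum over ordered triples of positive
integers with `i+j+l = N`. -/
theorem stmt3 (K : Type*) [Field K] [CharZero K] (A : Type*) [Ring A] [Algebra K A]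
    (η : ℕ → A) (hanti : ∀ i j, η i * η j = -(η j * η i)) :
    ∀ N : ℕ, ∑ i ∈ Finset.Ico 1 N, ∑ j ∈ Finset.Ico 1 (N - i),
      ((((i : K) + (j : K) - 2 - ((N - i - j : ℕ) : K)) * (i : K)) •
        (η i * η j * η (N - i - j))) = 0 := by
  intro N
  have step : ∀ i ∈ Finset.Ico 1 N, ∀ j ∈ Finset.Ico 1 (N - i),
      (((i : K) + (j : K) - 2 - ((N - i - j : ℕ) : K)) * (i : K)) •
        (η i * η j * η (N - i - j))
      = (((N : K) - 2) * (i : K)) • (η i * η j * η (N - i - j))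
        + (-(2 * ((N - i - j : ℕ) : K) * (i : K))) • (η i * η j * η (N - i - j)) := by
    intro i hi j hj
    rw [Finset.mem_Ico] at hi hj
    rw [← add_smul]
    congr 1
    have h0 : i + j + (N - i - j) = N := by omega
    have h1 : ((i : K) + (j : K)) + ((N - i - j : ℕ) : K) = (N : K) := by
      rw [show ((i : K) + (j : K)) = ((i + j : ℕ) : K) by push_cast; ring,
        ← Nat.cast_add, h0]
    linear_combination (i : K) * h1
  rw [Finset.sum_congr rfl (fun i hi => Finset.sum_congr rfl (fun j hj => step i hi j hj))]
  rw [Finset.sum_congr rfl (fun i _ => Finset.sum_add_distrib), Finset.sum_add_distrib]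
  have h1 : ∑ i ∈ Finset.Ico 1 N, ∑ j ∈ Finset.Ico 1 (N - i),
      (((N : K) - 2) * (i : K)) • (η i * η j * η (N - i - j)) = 0 :=
    lemA η hanti N (fun i _ _ => ((N : K) - 2) * (i : K)) (fun _ _ _ => rfl)
  have h2 : ∑ i ∈ Finset.Ico 1 N, ∑ j ∈ Finset.Ico 1 (N - i),
      (-(2 * ((N - i - j : ℕ) : K) * (i : K))) • (η i * η j * η (N - i - j)) = 0 :=
    lemB η hanti N (fun i _ l => -(2 * (l : K) * (i : K))) (fun i j l => by ring)
  rw [h1, h2, add_zero]
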